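/- If a permutation w in S_n contains no indices i < j < k with w(i) > w(j) > w(k) (i.e., w is 321-avoiding), then all reduced words of w form a single commutation class. -/

import Mathlib

def CommMove {S : Type*} (comm : S → S → Prop) (w w' : List S) : Prop :=
  ∃ (u v : List S) (a b : S), comm a b ∧ w = u ++ a :: b :: v ∧ w' = u ++ b :: a :: v

def CommClass {S : Type*} (comm : S → S → Prop) : List S → List S → Prop :=
  Relation.ReflTransGen (CommMove comm)

/-- The adjacent transposition `sᵢ = (i, i+1)` in `Sₙ`. -/
def adjSwap (n : ℕ) (i : Fin (n - 1)) : Equiv.Perm (Fin n) :=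
  Equiv.swap ⟨i.1, by omega⟩ ⟨i.1 + 1, by omega⟩

/-- `l` is a reduced word for the permutation `w`: its product is `w` and
it has minimal length among such words. -/
def IsReducedPermWord (n : ℕ) (w : Equiv.Perm (Fin n)) (l : List (Fin (n - 1))) : Prop :=
  (l.map (adjSwap n)).prod = w ∧
    ∀ l' : List (Fin (n - 1)), (l'.map (adjSwap n)).prod = w → l.length ≤ l'.length

theorem Equiv.Perm.apply_inv_self {α : Type*} (f : Equiv.Perm α) (x : α) : f (f⁻¹ x) = x :=
  Equiv.apply_symm_apply f x

theorem Equiv.Perm.inv_apply_self {α : Type*} (f : Equiv.Perm α) (x : α) : f⁻¹ (f x) = x :=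
  Equiv.symm_apply_apply f x

namespace Aux321

variable {n : ℕ}

/-- The value `i` as an element of `Fin n`. -/
def va (a : Fin (n - 1)) : Fin n := ⟨a.1, by omega⟩

/-- The value `i+1` as an element of `Fin n`. -/
def vb (a : Fin (n - 1)) : Fin n := ⟨a.1 + 1, by omega⟩

lemma adjSwap_def (a : Fin (n - 1)) : adjSwap n a = Equiv.swap (va a) (vb a) := rfl

lemma va_lt_vb (a : Fin (n - 1)) : va a < vb a := by
  simp [va, vb, Fin.lt_def]

lemma adjSwap_sq (a : Fin (n - 1)) : adjSwap n a * adjSwap n a = 1 :=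
  Equiv.swap_mul_self _ _

lemma adjSwap_inv (a : Fin (n - 1)) : (adjSwap n a)⁻¹ = adjSwap n a :=
  Equiv.swap_inv _ _

lemma adjSwap_va (a : Fin (n - 1)) : adjSwap n a (va a) = vb a :=
  Equiv.swap_apply_left _ _

lemma adjSwap_vb (a : Fin (n - 1)) : adjSwap n a (vb a) = va a :=
  Equiv.swap_apply_right _ _

lemma adjSwap_other (a : Fin (n - 1)) {u : Fin n} (h1 : u ≠ va a) (h2 : u ≠ vb a) :
    adjSwap n a u = u :=
  Equiv.swap_apply_of_ne_of_ne h1 h2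

lemma inv_mul_apply (a : Fin (n - 1)) (w : Equiv.Perm (Fin n)) (x : Fin n) :
    (adjSwap n a * w)⁻¹ x = w⁻¹ (adjSwap n a x) := by
  rw [mul_inv_rev, Equiv.Perm.mul_apply, adjSwap_inv]

/-- `adjSwap` preserves strict order except on the pair `(va a, vb a)`. -/
lemma adjSwap_lt (a : Fin (n - 1)) {u v : Fin n}
    (hlt : v < u) (hne : ¬(u.1 = a.1 + 1 ∧ v.1 = a.1)) :
    adjSwap n a v < adjSwap n a u := by
  have ha := a.2
  have hu := u.2
  have hv := v.2
  rw [Fin.lt_def] at hlt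
  simp only [adjSwap, Equiv.swap_apply_def]
  split_ifs <;> (simp only [Fin.lt_def, Fin.ext_iff] at *) <;> omega

lemma adjSwap_lt_or (a : Fin (n - 1)) {u v : Fin n}
    (h : adjSwap n a v < adjSwap n a u) :
    v < u ∨ (v.1 = a.1 + 1 ∧ u.1 = a.1) := by
  rcases lt_trichotomy v u with h' | h' | h'
  · exact Or.inl h'
  · subst h'; exact absurd h (lt_irrefl _)
  · right
    by_contra hc
    exact absurd (adjSwap_lt a h' hc) (lt_asymm h)

/-- The number of inversions. -/
def invNum (w : Equiv.Perm (Fin n)) : ℕ :=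
  (Finset.univ.filter fun p : Fin n × Fin n => p.1 < p.2 ∧ w p.2 < w p.1).card

lemma invNum_one : invNum (1 : Equiv.Perm (Fin n)) = 0 := by
  rw [invNum, Finset.card_eq_zero, Finset.filter_eq_empty_iff]
  rintro ⟨i, j⟩ _
  simp only [Equiv.Perm.one_apply]
  rintro ⟨h1, h2⟩
  exact absurd h2 (lt_asymm h1)

lemma invNum_mul_of_not_descent (a : Fin (n - 1)) (w : Equiv.Perm (Fin n))
    (h : w⁻¹ (va a) < w⁻¹ (vb a)) :
    invNum (adjSwap n a * w) = invNum w + 1 := by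
  classical
  set P := w⁻¹ (va a) with hP
  set Q := w⁻¹ (vb a) with hQ
  have hwP : w P = va a := Equiv.Perm.apply_inv_self w _
  have hwQ : w Q = vb a := Equiv.Perm.apply_inv_self w _
  have key : (Finset.univ.filter fun p : Fin n × Fin n =>
        p.1 < p.2 ∧ (adjSwap n a * w) p.2 < (adjSwap n a * w) p.1)
      = insert (P, Q) (Finset.univ.filter fun p : Fin n × Fin n =>
        p.1 < p.2 ∧ w p.2 < w p.1) := by
    ext ⟨i, j⟩
    rw [Finset.mem_filter]
    simp only [Finset.mem_insert, Finset.mem_filter, Finset.mem_univ, true_and,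
      Prod.mk.injEq, Equiv.Perm.mul_apply]
    constructor
    · rintro ⟨hij, hlt⟩
      by_cases hPQ : i = P ∧ j = Q
      · exact Or.inl hPQ
      · refine Or.inr ⟨hij, ?_⟩
        rcases adjSwap_lt_or a hlt with h' | ⟨h1, h2⟩
        · exact h'
        · exfalso
          apply hPQ
          have hwj : w j = vb a := Fin.ext h1
          have hwi : w i = va a := Fin.ext h2
          constructor
          · rw [hP, ← hwi, Equiv.Perm.inv_apply_self]
          · rw [hQ, ← hwj, Equiv.Perm.inv_apply_self]
    · rintro (⟨hi, hj⟩ | ⟨hij, hlt⟩)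
      · subst hi; subst hj
        refine ⟨h, ?_⟩
        rw [hwP, hwQ, adjSwap_va, adjSwap_vb]
        exact va_lt_vb a
      · refine ⟨hij, ?_⟩
        apply adjSwap_lt a hlt
        rintro ⟨h1, h2⟩
        have hwi : w i = vb a := Fin.ext h1
        have hwj : w j = va a := Fin.ext h2
        have hiQ : i = Q := by rw [hQ, ← hwi, Equiv.Perm.inv_apply_self]
        have hjP : j = P := by rw [hP, ← hwj, Equiv.Perm.inv_apply_self]
        rw [hiQ, hjP] at hij
        exact absurd (h.trans hij) (lt_irrefl _)
  have hnotmem : (P, Q) ∉ (Finset.univ.filter fun p : Fin n × Fin n =>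
      p.1 < p.2 ∧ w p.2 < w p.1) := by
    simp only [Finset.mem_filter, Finset.mem_univ, true_and, not_and]
    intro _
    rw [hwP, hwQ]
    exact asymm (va_lt_vb a)
  rw [invNum, key, Finset.card_insert_of_notMem hnotmem, invNum]

lemma invNum_of_descent (a : Fin (n - 1)) (w : Equiv.Perm (Fin n))
    (h : w⁻¹ (vb a) < w⁻¹ (va a)) :
    invNum w = invNum (adjSwap n a * w) + 1 := by
  have h2 : (adjSwap n a * w)⁻¹ (va a) < (adjSwap n a * w)⁻¹ (vb a) := by
    rw [inv_mul_apply, inv_mul_apply, adjSwap_va, adjSwap_vb]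
    exact h
  have := invNum_mul_of_not_descent a (adjSwap n a * w) h2
  rwa [← mul_assoc, adjSwap_sq, one_mul] at this

lemma va_ne_vb (a : Fin (n - 1)) : va a ≠ vb a := by
  simp [va, vb, Fin.ext_iff]

lemma invNum_le_length (l : List (Fin (n - 1))) :
    invNum (l.map (adjSwap n)).prod ≤ l.length := by
  induction l with
  | nil => simp [invNum_one]
  | cons a t ih =>
    rw [List.map_cons, List.prod_cons, List.length_cons]
    set u := (t.map (adjSwap n)).prod with hu
    rcases lt_trichotomy (u⁻¹ (va a)) (u⁻¹ (vb a)) with h | h | h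
    · rw [invNum_mul_of_not_descent a u h]; omega
    · exact absurd (u⁻¹.injective h) (va_ne_vb a)
    · have := invNum_of_descent a u h
      omega

lemma eq_one_of_no_descent (w : Equiv.Perm (Fin n))
    (h : ∀ a : Fin (n - 1), ¬(w⁻¹ (vb a) < w⁻¹ (va a))) : w = 1 := by
  match n, w, h with
  | 0, w, h => exact Subsingleton.elim w 1
  | (m + 1), w, h =>
    have hmono : StrictMono ⇑(w⁻¹) := by
      rw [Fin.strictMono_iff_lt_succ]
      intro i
      have hi : (i : Fin ((m + 1) - 1)) = i := rfl
      have := h i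
      rcases lt_trichotomy (w⁻¹ (va i)) (w⁻¹ (vb i)) with h' | h' | h'
      · have hva : va (n := m + 1) i = Fin.castSucc i := by
          simp [va, Fin.ext_iff]
        have hvb : vb (n := m + 1) i = i.succ := by
          simp [vb, Fin.ext_iff]
        rwa [hva, hvb] at h'
      · exact absurd (w⁻¹.injective h') (va_ne_vb (n := m + 1) i)
      · exact absurd h' (h i)
    have hrange : Set.range ⇑(w⁻¹) = Set.range (id : Fin (m + 1) → Fin (m + 1)) := by
      simp [Equiv.range_eq_univ]
    have : ⇑(w⁻¹) = id := by
      have hwf : WellFoundedLT (Fin (m + 1)) := inferInstance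
      exact (hmono.range_inj strictMono_id).1 hrange
    have hinv : w⁻¹ = 1 := Equiv.ext fun x => congrFun this x
    rw [← inv_inv w, hinv, inv_one]

lemma exists_descent (w : Equiv.Perm (Fin n)) (hw : w ≠ 1) :
    ∃ a : Fin (n - 1), w⁻¹ (vb a) < w⁻¹ (va a) := by
  by_contra hc
  push_neg at hc
  exact hw (eq_one_of_no_descent w fun a => not_lt.2 (hc a))

lemma exists_word (k : ℕ) : ∀ w : Equiv.Perm (Fin n), invNum w = k →
    ∃ l : List (Fin (n - 1)), (l.map (adjSwap n)).prod = w ∧ l.length = k := by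
  induction k with
  | zero =>
    intro w hk
    have hw : w = 1 := by
      by_contra hc
      obtain ⟨a, ha⟩ := exists_descent w hc
      have := invNum_of_descent a w ha
      omega
    exact ⟨[], by simp [hw], rfl⟩
  | succ k ih =>
    intro w hk
    have hw : w ≠ 1 := by
      rintro rfl
      rw [invNum_one] at hk
      omega
    obtain ⟨a, ha⟩ := exists_descent w hw
    have h1 := invNum_of_descent a w ha
    obtain ⟨l, hl, hlen⟩ := ih (adjSwap n a * w) (by omega)
    refine ⟨a :: l, ?_, by simp [hlen]⟩
    rw [List.map_cons, List.prod_cons, hl, ← mul_assoc, adjSwap_sq, one_mul]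

lemma reduced_iff (w : Equiv.Perm (Fin n)) (l : List (Fin (n - 1))) :
    IsReducedPermWord n w l ↔ (l.map (adjSwap n)).prod = w ∧ l.length = invNum w := by
  constructor
  · rintro ⟨hp, hmin⟩
    refine ⟨hp, le_antisymm ?_ ?_⟩
    · obtain ⟨l0, h0, hlen0⟩ := exists_word (invNum w) w rfl
      exact hlen0 ▸ hmin l0 h0
    · exact hp ▸ invNum_le_length l
  · rintro ⟨hp, hlen⟩
    refine ⟨hp, fun l' h' => ?_⟩
    rw [hlen, ← h']
    exact invNum_le_length l'

lemma tail_word (w : Equiv.Perm (Fin n)) (a : Fin (n - 1)) (t : List (Fin (n - 1)))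
    (hp : ((a :: t).map (adjSwap n)).prod = w) :
    (t.map (adjSwap n)).prod = adjSwap n a * w := by
  rw [List.map_cons, List.prod_cons] at hp
  rw [← hp, ← mul_assoc, adjSwap_sq, one_mul]

lemma head_descent (w : Equiv.Perm (Fin n)) (a : Fin (n - 1)) (t : List (Fin (n - 1)))
    (h : IsReducedPermWord n w (a :: t)) :
    w⁻¹ (vb a) < w⁻¹ (va a) := by
  rw [reduced_iff] at h
  obtain ⟨hp, hlen⟩ := h
  have hword := tail_word w a t hp
  have hle : invNum (adjSwap n a * w) ≤ t.length := hword ▸ invNum_le_length t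
  rw [List.length_cons] at hlen
  rcases lt_trichotomy (w⁻¹ (va a)) (w⁻¹ (vb a)) with h' | h' | h'
  · have := invNum_mul_of_not_descent a w h'
    omega
  · exact absurd (w⁻¹.injective h') (va_ne_vb a)
  · exact h'

lemma reduced_tail (w : Equiv.Perm (Fin n)) (a : Fin (n - 1)) (t : List (Fin (n - 1)))
    (h : IsReducedPermWord n w (a :: t)) :
    IsReducedPermWord n (adjSwap n a * w) t := by
  have hd := head_descent w a t h
  rw [reduced_iff] at h ⊢
  obtain ⟨hp, hlen⟩ := h
  have hword := tail_word w a t hp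
  have hinv := invNum_of_descent a w hd
  rw [List.length_cons] at hlen
  exact ⟨hword, by omega⟩

/-- The 321-avoiding property. -/
def Avoid (w : Equiv.Perm (Fin n)) : Prop :=
  ¬ ∃ i j k : Fin n, i < j ∧ j < k ∧ w j < w i ∧ w k < w j

lemma avoid_step (w : Equiv.Perm (Fin n)) (a : Fin (n - 1))
    (hd : w⁻¹ (vb a) < w⁻¹ (va a)) (hav : Avoid w) :
    Avoid (adjSwap n a * w) := by
  rintro ⟨i, j, k, hij, hjk, h1, h2⟩
  rw [Equiv.Perm.mul_apply, Equiv.Perm.mul_apply] at h1 h2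
  rcases adjSwap_lt_or a h1 with hvu | ⟨hf1, hf2⟩
  · rcases adjSwap_lt_or a h2 with hzv | ⟨hg1, hg2⟩
    · exact hav ⟨i, j, k, hij, hjk, hvu, hzv⟩
    · -- w k = vb a, w j = va a
      have hwk : w k = vb a := Fin.ext hg1
      have hwj : w j = va a := Fin.ext hg2
      have hk : w⁻¹ (vb a) = k := by rw [← hwk, Equiv.Perm.inv_apply_self]
      have hj : w⁻¹ (va a) = j := by rw [← hwj, Equiv.Perm.inv_apply_self]
      rw [hk, hj] at hd
      exact absurd (hd.trans hjk) (lt_irrefl _)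
  · -- w j = vb a, w i = va a
    have hwj : w j = vb a := Fin.ext hf1
    have hwi : w i = va a := Fin.ext hf2
    have hj : w⁻¹ (vb a) = j := by rw [← hwj, Equiv.Perm.inv_apply_self]
    have hi : w⁻¹ (va a) = i := by rw [← hwi, Equiv.Perm.inv_apply_self]
    rw [hj, hi] at hd
    exact absurd (hd.trans hij) (lt_irrefl _)

lemma adjSwap_comm (a b : Fin (n - 1)) (h : a.1 + 2 ≤ b.1 ∨ b.1 + 2 ≤ a.1) :
    adjSwap n a * adjSwap n b = adjSwap n b * adjSwap n a := by
  apply Equiv.ext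
  intro x
  have ha := a.2
  have hb := b.2
  have hx := x.2
  simp only [Equiv.Perm.mul_apply, adjSwap, Equiv.swap_apply_def]
  split_ifs <;> (simp only [Fin.ext_iff] at *) <;> omega

section CommClassLemmas

variable {S : Type*} {c : S → S → Prop}

lemma commClass_cons (a : S) {t t' : List S} (h : CommClass c t t') :
    CommClass c (a :: t) (a :: t') := by
  refine Relation.ReflTransGen.lift (a :: ·) ?_ _ _ h
  rintro x y ⟨u, v, p, q, hc, hx, hy⟩
  exact ⟨a :: u, v, p, q, hc, by simp [hx], by simp [hy]⟩

lemma commClass_swap {p q : S} (hc : c p q) (m : List S) :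
    CommClass c (p :: q :: m) (q :: p :: m) :=
  Relation.ReflTransGen.single ⟨[], m, p, q, hc, rfl, rfl⟩

lemma commClass_symm (hsym : Symmetric c) {x y : List S} (h : CommClass c x y) :
    CommClass c y x := by
  refine (@Relation.ReflTransGen.symmetric _ (CommMove c) ⟨?_⟩).symm _ _ h
  rintro z z' ⟨u, v, p, q, hc, hx, hy⟩
  exact ⟨u, v, q, p, hsym hc, hy, hx⟩

end CommClassLemmas

lemma main (N : ℕ) : ∀ (w : Equiv.Perm (Fin n)), Avoid w →
    ∀ l l' : List (Fin (n - 1)), l.length ≤ N →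
    IsReducedPermWord n w l → IsReducedPermWord n w l' →
    CommClass (fun a b : Fin (n - 1) => (a.1 + 2 ≤ b.1 ∨ b.1 + 2 ≤ a.1)) l l' := by
  induction N with
  | zero =>
    intro w hav l l' hlen hl hl'
    have h1 : l = [] := List.eq_nil_of_length_eq_zero (Nat.le_zero.1 hlen)
    subst h1
    have h2 : l' = [] := List.eq_nil_of_length_eq_zero
      (Nat.le_zero.1 (hl'.2 [] hl.1))
    subst h2
    exact Relation.ReflTransGen.refl
  | succ N ih =>
    intro w hav l l' hlen hl hl'
    have hll' : l.length = l'.length := le_antisymm (hl.2 l' hl'.1) (hl'.2 l hl.1)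
    match l, l', hll' with
    | [], l', hll' =>
      have h2 : l' = [] := List.eq_nil_of_length_eq_zero hll'.symm
      subst h2
      exact Relation.ReflTransGen.refl
    | (a :: t), (b :: t'), hll' =>
      have hda := head_descent w a t hl
      have hdb := head_descent w b t' hl'
      have hta := reduced_tail w a t hl
      have htb := reduced_tail w b t' hl'
      have htlen : t.length ≤ N := by
        rw [List.length_cons] at hlen; omega
      have ht'len : t'.length ≤ N := by
        simp only [List.length_cons, Nat.succ.injEq] at hll'
        omega
      have hava : Avoid (adjSwap n a * w) := avoid_step w a hda hav
      by_cases hab : a = b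
      · subst hab
        exact commClass_cons a (ih (adjSwap n a * w) hava t t' htlen hta htb)
      · have hcomm : a.1 + 2 ≤ b.1 ∨ b.1 + 2 ≤ a.1 := by
          by_contra hc
          push_neg at hc
          have hne : a.1 ≠ b.1 := fun h => hab (Fin.ext h)
          rcases (show a.1 + 1 = b.1 ∨ b.1 + 1 = a.1 by omega) with h | h
          · -- va b = vb a; pattern w⁻¹(vb b) < w⁻¹(va b) = w⁻¹(vb a) < w⁻¹(va a)
            have hvab : va b = vb a := Fin.ext h.symm
            apply hav
            refine ⟨w⁻¹ (vb b), w⁻¹ (va b), w⁻¹ (va a), hdb, ?_, ?_, ?_⟩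
            · rw [hvab]; exact hda
            · rw [Equiv.Perm.apply_inv_self, Equiv.Perm.apply_inv_self]
              simp only [va, vb, Fin.lt_def]
              omega
            · rw [Equiv.Perm.apply_inv_self, Equiv.Perm.apply_inv_self]
              simp only [va, vb, Fin.lt_def]
              omega
          · have hvab : va a = vb b := Fin.ext h.symm
            apply hav
            refine ⟨w⁻¹ (vb a), w⁻¹ (va a), w⁻¹ (va b), hda, ?_, ?_, ?_⟩
            · rw [hvab]; exact hdb
            · rw [Equiv.Perm.apply_inv_self, Equiv.Perm.apply_inv_self]
              simp only [va, vb, Fin.lt_def]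
              omega
            · rw [Equiv.Perm.apply_inv_self, Equiv.Perm.apply_inv_self]
              simp only [va, vb, Fin.lt_def]
              omega
        -- b is still a descent of (adjSwap n a * w)
        have hfixb : adjSwap n a (va b) = va b := by
          apply adjSwap_other
          · simp only [va, ne_eq, Fin.mk.injEq]; omega
          · simp only [va, vb, ne_eq, Fin.mk.injEq]; omega
        have hfixb' : adjSwap n a (vb b) = vb b := by
          apply adjSwap_other
          · simp only [va, vb, ne_eq, Fin.mk.injEq]; omega
          · simp only [vb, ne_eq, Fin.mk.injEq]; omega
        have hdb' : (adjSwap n a * w)⁻¹ (vb b) < (adjSwap n a * w)⁻¹ (va b) := by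
          rw [inv_mul_apply, inv_mul_apply, hfixb, hfixb']
          exact hdb
        obtain ⟨m, hm, hmlen⟩ :=
          exists_word (invNum (adjSwap n b * (adjSwap n a * w))) (adjSwap n b * (adjSwap n a * w)) rfl
        -- b :: m is reduced for adjSwap n a * w
        have hinv_a : invNum w = invNum (adjSwap n a * w) + 1 := invNum_of_descent a w hda
        have hinv_b : invNum w = invNum (adjSwap n b * w) + 1 := invNum_of_descent b w hdb
        have hinv_ba : invNum (adjSwap n a * w)
            = invNum (adjSwap n b * (adjSwap n a * w)) + 1 :=
          invNum_of_descent b (adjSwap n a * w) hdb'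
        have hbm : IsReducedPermWord n (adjSwap n a * w) (b :: m) := by
          rw [reduced_iff]
          constructor
          · rw [List.map_cons, List.prod_cons, hm, ← mul_assoc, adjSwap_sq, one_mul]
          · rw [List.length_cons]; omega
        have hcommmul : adjSwap n a * adjSwap n b = adjSwap n b * adjSwap n a :=
          adjSwap_comm a b hcomm
        have havb : Avoid (adjSwap n b * w) := avoid_step w b hdb hav
        have ham : IsReducedPermWord n (adjSwap n b * w) (a :: m) := by
          rw [reduced_iff]
          constructor
          · rw [List.map_cons, List.prod_cons, hm, ← mul_assoc, ← mul_assoc, hcommmul,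
              mul_assoc (adjSwap n b), adjSwap_sq, mul_one]
          · rw [List.length_cons]; omega
        have h1 : CommClass (fun a b : Fin (n - 1) => (a.1 + 2 ≤ b.1 ∨ b.1 + 2 ≤ a.1)) t (b :: m) :=
          ih (adjSwap n a * w) hava t (b :: m) htlen hta hbm
        have h2 : CommClass (fun a b : Fin (n - 1) => (a.1 + 2 ≤ b.1 ∨ b.1 + 2 ≤ a.1)) t' (a :: m) :=
          ih (adjSwap n b * w) havb t' (a :: m) ht'len htb ham
        have hsym : Symmetric (fun a b : Fin (n - 1) => (a.1 + 2 ≤ b.1 ∨ b.1 + 2 ≤ a.1)) := by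
          intro x y hxy
          tauto
        exact ((commClass_cons a h1).trans ((commClass_swap
          (c := fun a b : Fin (n - 1) => (a.1 + 2 ≤ b.1 ∨ b.1 + 2 ≤ a.1))
          (p := a) (q := b) hcomm m).trans
          (commClass_symm hsym (commClass_cons b h2))))

end Aux321

/-- A 321-avoiding permutation has a single commutation class of reduced words. -/
theorem avoiding_321_single_commClass (n : ℕ) (w : Equiv.Perm (Fin n))
    (havoid : ¬ ∃ i j k : Fin n, i < j ∧ j < k ∧ w j < w i ∧ w k < w j)
    (l l' : List (Fin (n - 1)))
    (hl : IsReducedPermWord n w l) (hl' : IsReducedPermWord n w l') :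
    CommClass (fun a b : Fin (n - 1) => (a.1 + 2 ≤ b.1 ∨ b.1 + 2 ≤ a.1)) l l' :=
  Aux321.main l.length w havoid l l' le_rfl hl hl'
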